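/- Fix n ≥ 1. Let A_1 be the 2n×2n real matrix with entries (A_1)_{2k−1,2k} = (A_1)_{2k,2k−1} = 1 for 1 ≤ k ≤ n, (A_1)_{2k,2k+1} = (A_1)_{2k+1,2k} = −1 for 1 ≤ k ≤ n−1, and 0 elsewhere; let D = diag(1,−1,1,…,−1) of size 2n, and for k ≥ 1 let A_{k+1} = A_1 ⊗ I_{(2n)^k} + D ⊗ A_k. Then for every k ≥ 1: (i) A_k is invertible (0 is not an eigenvalue of A_k); (ii) if λ is an eigenvalue of A_k then so is −λ. -/

import Mathlib

open Kronecker Matrix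

/-- A matrix `M` has real eigenvalue `μ` if `M x = μ x` for some nonzero vector `x`. -/
def HasEig {I : Type*} [Fintype I] (M : Matrix I I ℝ) (μ : ℝ) : Prop :=
  ∃ x : I → ℝ, x ≠ 0 ∧ M.mulVec x = μ • x

/-- The signed adjacency matrix `A_1` of the path `P_{2n}`: in 1-indexed terms,
`(A_1)_{2k−1,2k} = (A_1)_{2k,2k−1} = 1` for `1 ≤ k ≤ n` and
`(A_1)_{2k,2k+1} = (A_1)_{2k+1,2k} = −1` for `1 ≤ k ≤ n−1`, zero elsewhere.
On the 0-indexed `Fin (2n)`, the entry at `(i, i+1)` is `1` when `i` is even and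
`−1` when `i` is odd. -/
def signedPath (n : ℕ) : Matrix (Fin (2 * n)) (Fin (2 * n)) ℝ :=
  Matrix.of fun i j =>
    if (i : ℕ) + 1 = (j : ℕ) then (if (i : ℕ) % 2 = 0 then 1 else -1)
    else if (j : ℕ) + 1 = (i : ℕ) then (if (j : ℕ) % 2 = 0 then 1 else -1)
    else 0

/-- `D = diag(1, −1, 1, …, −1)` of size `2n`. -/
def altDiag (n : ℕ) : Matrix (Fin (2 * n)) (Fin (2 * n)) ℝ :=
  Matrix.diagonal fun i => if (i : ℕ) % 2 = 0 then 1 else -1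

/-- The signed adjacency matrices of `P_{2n}^k`: `APn n 0 = A_1` and
`APn n (k+1) = A_1 ⊗ I_{(2n)^(k+1)} + D ⊗ APn n k` (Kronecker products), so
`APn n k` is the matrix `A_{k+1}` of the paper; it is indexed by
`Fin (k+1) → Fin (2n)`, a type of cardinality `(2n)^(k+1)`. -/
noncomputable def APn (n : ℕ) :
    (k : ℕ) → Matrix (Fin (k + 1) → Fin (2 * n)) (Fin (k + 1) → Fin (2 * n)) ℝ
  | 0 => Matrix.reindex (Equiv.funUnique (Fin 1) (Fin (2 * n))).symm
      (Equiv.funUnique (Fin 1) (Fin (2 * n))).symm (signedPath n)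
  | (k + 1) =>
      Matrix.reindex (Fin.consEquiv fun _ : Fin (k + 2) => Fin (2 * n))
        (Fin.consEquiv fun _ : Fin (k + 2) => Fin (2 * n))
        (signedPath n ⊗ₖ
            (1 : Matrix (Fin (k + 1) → Fin (2 * n)) (Fin (k + 1) → Fin (2 * n)) ℝ)
          + altDiag n ⊗ₖ APn n k)



set_option linter.unusedSectionVars false

lemma signedPath_transpose (n : ℕ) : (signedPath n)ᵀ = signedPath n := by
  ext i j
  simp only [transpose_apply, signedPath, of_apply]
  by_cases h1 : (i : ℕ) + 1 = (j : ℕ) <;> by_cases h2 : (j : ℕ) + 1 = (i : ℕ) <;>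
    simp [h1, h2] <;> omega

lemma altDiag_transpose (n : ℕ) : (altDiag n)ᵀ = altDiag n := by
  rw [altDiag, diagonal_transpose]

lemma altDiag_mul_self (n : ℕ) : altDiag n * altDiag n = 1 := by
  rw [altDiag, diagonal_mul_diagonal]
  rw [show (fun i : Fin (2*n) => (if (i:ℕ) % 2 = 0 then (1:ℝ) else -1) *
      (if (i:ℕ) % 2 = 0 then 1 else -1)) = fun _ => (1:ℝ) from funext fun i => by
    split_ifs <;> norm_num]
  exact diagonal_one

lemma altDiag_anticomm (n : ℕ) :
    altDiag n * signedPath n + signedPath n * altDiag n = 0 := by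
  ext i j
  simp only [Matrix.add_apply, Matrix.zero_apply, altDiag, diagonal_mul, mul_diagonal]
  by_cases h1 : (i : ℕ) + 1 = (j : ℕ)
  · have h2 : ¬ ((j : ℕ) + 1 = (i : ℕ)) := by omega
    simp only [signedPath, of_apply, if_pos h1, if_neg h2]
    rcases Nat.mod_two_eq_zero_or_one (i : ℕ) with h | h <;>
      [(have hj : (j:ℕ) % 2 = 1 := by omega); (have hj : (j:ℕ) % 2 = 0 := by omega)] <;>
      simp [h, hj]
  · by_cases h2 : (j : ℕ) + 1 = (i : ℕ)
    · simp only [signedPath, of_apply, if_neg h1, if_pos h2]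
      rcases Nat.mod_two_eq_zero_or_one (i : ℕ) with h | h <;>
        [(have hj : (j:ℕ) % 2 = 1 := by omega); (have hj : (j:ℕ) % 2 = 0 := by omega)] <;>
        simp [h, hj]
    · simp [signedPath, h1, h2]

section Aux
variable {I J : Type*} [Fintype I] [Fintype J] [DecidableEq I] [DecidableEq J]


variable {I J : Type*} [Fintype I] [Fintype J] [DecidableEq I] [DecidableEq J]

/-- trivial kernel predicate -/
def KerTriv {I : Type*} [Fintype I] (M : Matrix I I ℝ) : Prop :=
  ∀ v : I → ℝ, M.mulVec v = 0 → v = 0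

lemma dot_transpose_mul (P : Matrix I I ℝ) (v : I → ℝ) :
    v ⬝ᵥ ((Pᵀ * P) *ᵥ v) = (P *ᵥ v) ⬝ᵥ (P *ᵥ v) := by
  rw [← mulVec_mulVec, dotProduct_mulVec, vecMul_transpose]

lemma dot_self_nonneg (v : I → ℝ) : 0 ≤ v ⬝ᵥ v :=
  Finset.sum_nonneg fun i _ => mul_self_nonneg _

lemma kron_one_mulVec (A : Matrix I I ℝ) (v : I × J → ℝ) (i : I) (j : J) :
    ((A ⊗ₖ (1 : Matrix J J ℝ)) *ᵥ v) (i, j) = (A *ᵥ (fun i' => v (i', j))) i := by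
  simp [mulVec, dotProduct, Fintype.sum_prod_type, one_apply, mul_ite, ite_mul,
    Finset.sum_ite_eq]

lemma kerTriv_kron_one (A : Matrix I I ℝ) (hA : KerTriv A) :
    KerTriv (A ⊗ₖ (1 : Matrix J J ℝ)) := by
  intro v hv
  funext p
  obtain ⟨i, j⟩ := p
  have h1 : A *ᵥ (fun i' => v (i', j)) = 0 := by
    funext i''
    have h := congrFun hv (i'', j)
    rw [kron_one_mulVec] at h
    simpa using h
  exact congrFun (hA _ h1) i

end Aux

lemma sum_ite_eq_coe (m t : ℕ) (c : Fin m → ℝ) :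
    ∑ j : Fin m, (if t = (j : ℕ) then c j else 0) =
      if h : t < m then c ⟨t, h⟩ else 0 := by
  split_ifs with h
  · rw [Finset.sum_eq_single (⟨t, h⟩ : Fin m)]
    · simp
    · intro j _ hj
      rw [if_neg]
      intro he; exact hj (Fin.ext he.symm)
    · simp
  · refine Finset.sum_eq_zero fun j _ => if_neg fun he => h ?_
    rw [he]; exact j.2

lemma sum_ite_pred (m t : ℕ) (c : Fin m → ℝ) :
    ∑ j : Fin m, (if (j : ℕ) + 1 = t then c j else 0) =
      if h : t ≠ 0 ∧ t - 1 < m then c ⟨t - 1, h.2⟩ else 0 := by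
  split_ifs with h
  · rw [Finset.sum_eq_single (⟨t - 1, h.2⟩ : Fin m)]
    · rw [if_pos]; simp; omega
    · intro j _ hj
      rw [if_neg]
      intro he; exact hj (Fin.ext (by simp; omega))
    · simp
  · refine Finset.sum_eq_zero fun j _ => if_neg fun he => h ?_
    have := j.2; omega

lemma signedPath_kerTriv (n : ℕ) : KerTriv (signedPath n) := by
  intro x hx
  set s : ℕ → ℝ := fun m => if m % 2 = 0 then 1 else -1 with hs
  set X : ℕ → ℝ := fun m => if h : m < 2 * n then x ⟨m, h⟩ else 0 with hX
  have sEven : ∀ m, m % 2 = 0 → s m = 1 := fun m h => by simp only [hs]; rw [if_pos h]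
  have sOdd : ∀ m, m % 2 = 1 → s m = -1 := fun m h => by
    simp only [hs]; rw [if_neg (by omega)]
  have key : ∀ m, m < 2 * n →
      s m * X (m + 1) + (if m = 0 then 0 else s (m - 1) * X (m - 1)) = 0 := by
    intro m hm
    have h0 : (signedPath n *ᵥ x) ⟨m, hm⟩ = 0 := congrFun hx _
    have hrow : ∀ j : Fin (2 * n), signedPath n ⟨m, hm⟩ j * x j =
        (if m + 1 = (j : ℕ) then s m * x j else 0)
          + (if (j : ℕ) + 1 = m then s (j : ℕ) * x j else 0) := by
      intro j
      simp only [signedPath, of_apply, hs]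
      split_ifs with h1 h2 h2 <;> first | omega | ring
    have hsum : (signedPath n *ᵥ x) ⟨m, hm⟩ =
        s m * X (m + 1) + (if m = 0 then 0 else s (m - 1) * X (m - 1)) := by
      rw [mulVec, dotProduct, Finset.sum_congr rfl (fun j _ => hrow j),
        Finset.sum_add_distrib, sum_ite_eq_coe, sum_ite_pred]
      congr 1
      · split_ifs with h
        · simp only [hX]; rw [dif_pos h]
        · simp only [hX]; rw [dif_neg h, mul_zero]
      · by_cases hm0 : m = 0
        · rw [dif_neg (by omega), if_pos hm0]
        · rw [dif_pos (show m ≠ 0 ∧ m - 1 < 2 * n from ⟨hm0, by omega⟩), if_neg hm0]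
          simp only [hX]
          rw [dif_pos (by omega)]
    rw [h0] at hsum; exact hsum.symm
  have hodd : ∀ t, 2 * t + 1 < 2 * n → X (2 * t + 1) = 0 := by
    intro t
    induction t with
    | zero =>
      intro ht
      have h := key 0 (by omega)
      rw [if_pos rfl, add_zero, sEven 0 (by omega), one_mul] at h
      exact h
    | succ t ih =>
      intro ht
      have hIH : X (2 * t + 1) = 0 := ih (by omega)
      have h := key (2 * t + 2) (by omega)
      have h := key (2 * t + 2) (by omega)
      rw [if_neg (by omega), sEven (2 * t + 2) (by omega), one_mul,
        show 2 * t + 2 - 1 = 2 * t + 1 from rfl,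
        sOdd (2 * t + 1) (by omega), hIH, mul_zero, add_zero] at h
      have e : 2 * (t + 1) + 1 = 2 * t + 2 + 1 := by omega
      rw [e]; exact h
  have heven : ∀ t, 2 * t + 2 ≤ 2 * n → X (2 * n - 2 - 2 * t) = 0 := by
    intro t
    induction t with
    | zero =>
      intro ht
      have h := key (2 * n - 1) (by omega)
      have e0 : X (2 * n - 1 + 1) = 0 := by
        simp only [hX]; rw [dif_neg (by omega)]
      rw [if_neg (by omega), e0, mul_zero, zero_add,
        sEven (2 * n - 1 - 1) (by omega), one_mul] at h
      have e : 2 * n - 2 - 2 * 0 = 2 * n - 1 - 1 := by omega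
      rw [e]; exact h
    | succ t ih =>
      intro ht
      have hIH : X (2 * n - 2 - 2 * t) = 0 := ih (by omega)
      have h := key (2 * n - 3 - 2 * t) (by omega)
      have e3 : 2 * n - 3 - 2 * t + 1 = 2 * n - 2 - 2 * t := by omega
      have e4 : 2 * n - 3 - 2 * t - 1 = 2 * n - 2 - 2 * (t + 1) := by omega
      rw [if_neg (by omega), sOdd (2 * n - 3 - 2 * t) (by omega), e3, e4, hIH,
        mul_zero, zero_add, sEven (2 * n - 2 - 2 * (t + 1)) (by omega), one_mul] at h
      exact h
  funext i
  show x i = 0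
  have hxi : x i = X (i : ℕ) := by simp only [hX]; rw [dif_pos i.2]
  rw [hxi]
  rcases Nat.even_or_odd (i : ℕ) with he | ho
  · have hi := i.2
    obtain ⟨c, hc⟩ := he
    have h1 : (i : ℕ) = 2 * n - 2 - 2 * ((2 * n - 2 - (i : ℕ)) / 2) := by omega
    rw [h1]
    exact heven _ (by omega)
  · have hi := i.2
    obtain ⟨t, ht⟩ := ho
    rw [show (i : ℕ) = 2 * t + 1 by omega]
    exact hodd _ (by omega)
section Step

variable {J : Type*} [Fintype J] [DecidableEq J]

lemma step_transpose (n : ℕ) (M : Matrix J J ℝ) (hM : Mᵀ = M) :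
    (signedPath n ⊗ₖ (1 : Matrix J J ℝ) + altDiag n ⊗ₖ M)ᵀ
      = signedPath n ⊗ₖ (1 : Matrix J J ℝ) + altDiag n ⊗ₖ M := by
  rw [transpose_add, ← kroneckerMap_transpose, ← kroneckerMap_transpose,
    signedPath_transpose, altDiag_transpose, transpose_one, hM]

lemma step_kerTriv (n : ℕ) (M : Matrix J J ℝ) (hM : Mᵀ = M) :
    KerTriv (signedPath n ⊗ₖ (1 : Matrix J J ℝ) + altDiag n ⊗ₖ M) := by
  intro v hv
  set P := signedPath n ⊗ₖ (1 : Matrix J J ℝ) with hP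
  set Q := altDiag n ⊗ₖ M with hQ
  have hcross : Pᵀ * Q + Qᵀ * P = 0 := by
    rw [hP, hQ, ← kroneckerMap_transpose, ← kroneckerMap_transpose,
      signedPath_transpose, altDiag_transpose, transpose_one, hM]
    show signedPath n ⊗ₖ (1 : Matrix J J ℝ) * (altDiag n ⊗ₖ M)
      + altDiag n ⊗ₖ M * (signedPath n ⊗ₖ (1 : Matrix J J ℝ)) = 0
    rw [← mul_kronecker_mul, ← mul_kronecker_mul, Matrix.one_mul, Matrix.mul_one,
      ← add_kronecker, show signedPath n * altDiag n + altDiag n * signedPath n = 0 by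
        rw [add_comm]; exact altDiag_anticomm n, zero_kronecker]
  have hNN : (P + Q)ᵀ * (P + Q) = Pᵀ * P + Qᵀ * Q := by
    rw [transpose_add, add_mul, mul_add, mul_add]
    have : Pᵀ * P + Pᵀ * Q + (Qᵀ * P + Qᵀ * Q) = Pᵀ * P + Qᵀ * Q + (Pᵀ * Q + Qᵀ * P) := by
      abel
    rw [this, hcross, add_zero]
  have h2 : (Pᵀ * P + Qᵀ * Q) *ᵥ v = 0 := by
    rw [← hNN, ← mulVec_mulVec, hv, mulVec_zero]
  have hsum : (P *ᵥ v) ⬝ᵥ (P *ᵥ v) + (Q *ᵥ v) ⬝ᵥ (Q *ᵥ v) = 0 := by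
    have h3 : v ⬝ᵥ ((Pᵀ * P + Qᵀ * Q) *ᵥ v) = 0 := by rw [h2, dotProduct_zero]
    rw [add_mulVec, dotProduct_add, dot_transpose_mul, dot_transpose_mul] at h3
    exact h3
  have hPv : P *ᵥ v = 0 := by
    rw [← dotProduct_self_eq_zero (v := P *ᵥ v)]
    have h4 := dot_self_nonneg (P *ᵥ v)
    have h5 := dot_self_nonneg (Q *ᵥ v)
    linarith
  exact kerTriv_kron_one (signedPath n) (signedPath_kerTriv n) v hPv

lemma step_anti (n : ℕ) (M S : Matrix J J ℝ) (hSA : S * M + M * S = 0) :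
    (altDiag n ⊗ₖ S) * (signedPath n ⊗ₖ (1 : Matrix J J ℝ) + altDiag n ⊗ₖ M)
      + (signedPath n ⊗ₖ (1 : Matrix J J ℝ) + altDiag n ⊗ₖ M) * (altDiag n ⊗ₖ S)
      = 0 := by
  rw [mul_add, add_mul, ← mul_kronecker_mul, ← mul_kronecker_mul, ← mul_kronecker_mul,
    ← mul_kronecker_mul, altDiag_mul_self, Matrix.one_mul, Matrix.mul_one]
  have hre : ((altDiag n * signedPath n) ⊗ₖ S) + ((1 : Matrix (Fin (2 * n)) (Fin (2 * n)) ℝ) ⊗ₖ (S * M))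
      + (((signedPath n * altDiag n) ⊗ₖ S) + ((1 : Matrix (Fin (2 * n)) (Fin (2 * n)) ℝ) ⊗ₖ (M * S)))
      = (altDiag n * signedPath n + signedPath n * altDiag n) ⊗ₖ S
        + (1 : Matrix (Fin (2 * n)) (Fin (2 * n)) ℝ) ⊗ₖ (S * M + M * S) := by
    rw [add_kronecker, kronecker_add]; abel
  rw [hre, altDiag_anticomm, hSA, zero_kronecker, kronecker_zero, add_zero]

lemma step_sq (n : ℕ) (S : Matrix J J ℝ) (hSS : S * S = 1) :
    (altDiag n ⊗ₖ S) * (altDiag n ⊗ₖ S) = 1 := by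
  rw [← mul_kronecker_mul, altDiag_mul_self, hSS, one_kronecker_one]

end Step

section Reindex

variable {I J : Type*} [Fintype I] [Fintype J] [DecidableEq I] [DecidableEq J]

lemma reindex_mul' (e : I ≃ J) (X Y : Matrix I I ℝ) :
    (reindex e e X) * (reindex e e Y) = reindex e e (X * Y) := by
  simp only [reindex_apply]
  rw [submatrix_mul_equiv]

lemma reindex_add' (e : I ≃ J) (X Y : Matrix I I ℝ) :
    reindex e e X + reindex e e Y = reindex e e (X + Y) := by
  ext i j
  simp [reindex_apply]

lemma reindex_kerTriv (e : I ≃ J) (M : Matrix I I ℝ) (h : KerTriv M) :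
    KerTriv (reindex e e M) := by
  intro v hv
  rw [reindex_apply, submatrix_mulVec_equiv] at hv
  have h1 : M *ᵥ (v ∘ e.symm.symm) = 0 := by
    funext i
    have := congrFun hv (e i)
    simpa using this
  have h2 := h _ h1
  funext j
  have := congrFun h2 (e.symm j)
  simpa using this

end Reindex

lemma APn_main (n : ℕ) (k : ℕ) :
    (APn n k)ᵀ = APn n k ∧ KerTriv (APn n k) ∧
      ∃ S : Matrix (Fin (k + 1) → Fin (2 * n)) (Fin (k + 1) → Fin (2 * n)) ℝ,
        S * S = 1 ∧ S * APn n k + APn n k * S = 0 := by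
  induction k with
  | zero =>
    set e := (Equiv.funUnique (Fin 1) (Fin (2 * n))).symm with he
    refine ⟨?_, ?_, reindex e e (altDiag n), ?_, ?_⟩
    · rw [APn, transpose_reindex, signedPath_transpose]
    · rw [APn]; exact reindex_kerTriv e _ (signedPath_kerTriv n)
    · rw [reindex_mul', altDiag_mul_self]; simp
    · rw [APn, reindex_mul', reindex_mul', reindex_add', altDiag_anticomm]
      simp
  | succ k ih =>
    obtain ⟨hT, hK, S, hSS, hSA⟩ := ih
    set e := (Fin.consEquiv fun _ : Fin (k + 2) => Fin (2 * n)) with he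
    refine ⟨?_, ?_, reindex e e (altDiag n ⊗ₖ S), ?_, ?_⟩
    · rw [APn, transpose_reindex, step_transpose n _ hT]
    · rw [APn]; exact reindex_kerTriv e _ (step_kerTriv n _ hT)
    · rw [reindex_mul', step_sq n S hSS]; simp
    · rw [APn, reindex_mul', reindex_mul', reindex_add', step_anti n _ S hSA]
      simp

/-- Fix `n ≥ 1`. For every `k ≥ 1` (here `APn n k` is the paper's `A_{k+1}`, `k : ℕ`):
(i) `A_k` is invertible (`0` is not an eigenvalue); (ii) if `λ` is an eigenvalue of
`A_k` then so is `−λ`. -/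
theorem APn_invertible_and_symm (n : ℕ) (hn : 1 ≤ n) (k : ℕ) :
    (IsUnit (APn n k) ∧ ¬ HasEig (APn n k) 0) ∧
    (∀ lam : ℝ, HasEig (APn n k) lam → HasEig (APn n k) (-lam)) := by
  obtain ⟨hT, hK, S, hSS, hSA⟩ := APn_main n k
  refine ⟨⟨?_, ?_⟩, ?_⟩
  · refine Matrix.mulVec_injective_iff_isUnit.mp ?_
    intro u v huv
    have h0 : APn n k *ᵥ (u - v) = 0 := by
      rw [mulVec_sub, huv, sub_self]
    have := hK _ h0
    exact sub_eq_zero.mp this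
  · rintro ⟨x, hx, hMx⟩
    rw [zero_smul] at hMx
    exact hx (hK x hMx)
  · rintro lam ⟨x, hx, hMx⟩
    refine ⟨S *ᵥ x, ?_, ?_⟩
    · intro h0
      apply hx
      have : (S * S) *ᵥ x = 0 := by rw [← mulVec_mulVec, h0, mulVec_zero]
      rwa [hSS, one_mulVec] at this
    · have hMS : APn n k * S = -(S * APn n k) :=
        eq_neg_of_add_eq_zero_right hSA
      rw [mulVec_mulVec, hMS, neg_mulVec, ← mulVec_mulVec, hMx, mulVec_smul]
      exact (neg_smul lam _).symm
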